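/- Let θ ∈ (0,2), θ ≠ 1, and define the 2×2 matrix A(z,θ) = −(1/2)I + [[a₁₁, a₁₂],[a₂₁, a₂₂]] where a₁₁(z,θ) = ((z+1) sin(πθ) cos(πz(1−θ)) − sin(π(z(1−θ)+θ)))/(2 sin(πz)), a₁₂(z,θ) = −(z−1) sin(πθ) sin(πz(1−θ))/(2 sin(πz)), a₂₁(z,θ) = (z+1) sin(πθ) sin(πz(1−θ))/(2 sin(πz)), a₂₂(z,θ) = ((z+1) sin(πθ) cos(πz(1−θ)) + sin(π(z(1−θ)−θ)))/(2 sin(πz)). Then for z ∈ ℂ not an integer, det A(z,θ) = (z sin(πθ) − sin(πzθ)) (z sin(πθ) − sin(πz(2−θ))) / (4 sin²(πz)). -/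

import Mathlib

open Real

lemma key_trig (z x y T : ℂ) :
    ((z+1) * Complex.sin y * Complex.cos (x - T) - Complex.sin (x - T + y) - Complex.sin x) *
    ((z+1) * Complex.sin y * Complex.cos (x - T) + Complex.sin (x - T - y) - Complex.sin x)
    + (z^2 - 1) * Complex.sin y ^ 2 * Complex.sin (x - T) ^ 2
    = (z * Complex.sin y - Complex.sin T) * (z * Complex.sin y - Complex.sin (x + x - T)) := by
  simp only [Complex.sin_add, Complex.sin_sub, Complex.cos_sub, Complex.cos_add]
  have h1 := Complex.sin_sq_add_cos_sq x
  have h2 := Complex.sin_sq_add_cos_sq T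
  have h3 := Complex.sin_sq_add_cos_sq y
  set sx := Complex.sin x; set cx := Complex.cos x
  set sT := Complex.sin T; set cT := Complex.cos T
  set sy := Complex.sin y; set cy := Complex.cos y
  linear_combination (sT^2 - sT^2*cy^2 - sT^2*sy^2 - z*sT*sy + z^2*cT^2*sy^2 + z^2*sT^2*sy^2) * h1
    + (-sx^2*cy^2 - sx^2*sy^2 + z^2*sy^2) * h2
    + (-sT^2 + 2*sx*cx*sT*cT - sx^2 + 2*sx^2*sT^2) * h3

lemma key2 (A B C D R s : ℂ) (hs : s ≠ 0)
    (h : (A - s)*(D - s) + B*C = R) :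
    (-(1/2 : ℂ) + A/(2*s)) * (-(1/2 : ℂ) + D/(2*s)) - (-B/(2*s)) * (C/(2*s)) = R / (4*s^2) := by
  have h4 : s^4 * s⁻¹^4 = 1 := by rw [← mul_pow, mul_inv_cancel₀ hs, one_pow]
  field_simp
  linear_combination 4 * h

noncomputable def a11 (z θ : ℂ) : ℂ :=
  ((z + 1) * Complex.sin ((π : ℂ) * θ) * Complex.cos ((π : ℂ) * z * (1 - θ))
    - Complex.sin ((π : ℂ) * (z * (1 - θ) + θ))) / (2 * Complex.sin ((π : ℂ) * z))

noncomputable def a12 (z θ : ℂ) : ℂ :=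
  -((z - 1) * Complex.sin ((π : ℂ) * θ) * Complex.sin ((π : ℂ) * z * (1 - θ)))
    / (2 * Complex.sin ((π : ℂ) * z))

noncomputable def a21 (z θ : ℂ) : ℂ :=
  ((z + 1) * Complex.sin ((π : ℂ) * θ) * Complex.sin ((π : ℂ) * z * (1 - θ)))
    / (2 * Complex.sin ((π : ℂ) * z))

noncomputable def a22 (z θ : ℂ) : ℂ :=
  ((z + 1) * Complex.sin ((π : ℂ) * θ) * Complex.cos ((π : ℂ) * z * (1 - θ))
    + Complex.sin ((π : ℂ) * (z * (1 - θ) - θ))) / (2 * Complex.sin ((π : ℂ) * z))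

theorem det_A_tone (θ : ℝ) (hθ : θ ∈ Set.Ioo (0 : ℝ) 2) (hθ1 : θ ≠ 1)
    (z : ℂ) (hz : ∀ n : ℤ, z ≠ (n : ℂ)) :
    Matrix.det
        (-(1 / 2 : ℂ) • (1 : Matrix (Fin 2) (Fin 2) ℂ) +
          !![a11 z θ, a12 z θ; a21 z θ, a22 z θ])
      = (z * Complex.sin ((π : ℂ) * θ) - Complex.sin ((π : ℂ) * z * θ))
          * (z * Complex.sin ((π : ℂ) * θ) - Complex.sin ((π : ℂ) * z * (2 - θ)))
          / (4 * Complex.sin ((π : ℂ) * z) ^ 2) := by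
  have hs : Complex.sin ((π : ℂ) * z) ≠ 0 := by
    rw [Complex.sin_ne_zero_iff]
    intro k h
    apply hz k
    have hpi : (π : ℂ) ≠ 0 := by
      exact_mod_cast Complex.ofReal_ne_zero.mpr Real.pi_ne_zero
    have : (π : ℂ) * z = (π : ℂ) * k := by rw [h]; ring
    exact mul_left_cancel₀ hpi this
  have hx := key_trig z ((π : ℂ) * z) ((π : ℂ) * θ) ((π : ℂ) * z * θ)
  simp only [Matrix.det_fin_two, Matrix.add_apply, Matrix.smul_apply, Matrix.one_apply,
    Matrix.cons_val', Matrix.cons_val_zero, Matrix.cons_val_one, Matrix.head_cons,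
    Matrix.head_fin_const, Matrix.empty_val', Matrix.cons_val_fin_one, a11, a12, a21, a22]
  norm_num
  rw [show (π : ℂ) * z * (1 - θ) = (π : ℂ) * z - (π : ℂ) * z * θ by ring,
      show (π : ℂ) * (z * (1 - θ) + θ) = ((π : ℂ) * z - (π : ℂ) * z * θ) + (π : ℂ) * θ by ring,
      show (π : ℂ) * (z * (1 - θ) - θ) = ((π : ℂ) * z - (π : ℂ) * z * θ) - (π : ℂ) * θ by ring,
      show (π : ℂ) * z * (2 - θ) = (π : ℂ) * z + (π : ℂ) * z - (π : ℂ) * z * θ by ring]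
  exact key2 _ _ _ _ _ _ hs (by linear_combination hx)
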